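/- For the bi-objective problem ORZR with f1 = OneRoyalRoad and f2 = ZeroRoyalRoad on bit-strings of length n = b·ℓ (b > 1), the Pareto set has exactly 2^b elements; equivalently, the ratio of Pareto optimal solutions among all 2^n bit-strings equals 2^{n/ℓ} / 2^n. -/
import Mathlib


open Finset

/-- Number of one-bits of a bit-string. -/
def onesCount {n : ℕ} (x : Fin n → Bool) : ℕ :=
  (Finset.univ.filter fun i => x i = true).card

/-- Number of zero-bits of a bit-string. -/
def zerosCount {n : ℕ} (x : Fin n → Bool) : ℕ :=
  (Finset.univ.filter fun i => x i = false).card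

/-- Number of leading one-bits. -/
def leadingOnes {n : ℕ} (x : Fin n → Bool) : ℕ :=
  (Finset.univ.filter fun i : Fin n => ∀ j : Fin n, j ≤ i → x j = true).card

/-- Number of trailing zero-bits. -/
def trailingZeroes {n : ℕ} (x : Fin n → Bool) : ℕ :=
  (Finset.univ.filter fun i : Fin n => ∀ j : Fin n, i ≤ j → x j = false).card

/-- `y` dominates `x` for the bi-objective maximisation problem `(f1, f2)`. -/
def dominates {n : ℕ} (f1 f2 : (Fin n → Bool) → ℕ) (y x : Fin n → Bool) : Prop :=
  f1 x ≤ f1 y ∧ f2 x ≤ f2 y ∧ (f1 x < f1 y ∨ f2 x < f2 y)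

/-- `x` is Pareto optimal: no solution dominates it. -/
def paretoOptimal {n : ℕ} (f1 f2 : (Fin n → Bool) → ℕ) (x : Fin n → Bool) : Prop :=
  ∀ y, ¬ dominates f1 f2 y x

/-- `x` is a non-global Pareto local optimum: not Pareto optimal, and not dominated by
any bit-string at Hamming distance exactly 1. -/
def nonGlobalParetoLocalOpt {n : ℕ} (f1 f2 : (Fin n → Bool) → ℕ) (x : Fin n → Bool) : Prop :=
  ¬ paretoOptimal f1 f2 x ∧ ∀ y, hammingDist y x = 1 → ¬ dominates f1 f2 y x

/-- The ZeroJump function with jump parameter `k`. -/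
def zeroJump (n k : ℕ) (x : Fin n → Bool) : ℕ :=
  if zerosCount x ≤ n - k ∨ x = (fun _ => false) then k + zerosCount x else n - zerosCount x

/-- The OneJump function with jump parameter `k`. -/
def oneJump (n k : ℕ) (x : Fin n → Bool) : ℕ :=
  if onesCount x ≤ n - k ∨ x = (fun _ => true) then k + onesCount x else n - onesCount x

/-- Block `j` (0-indexed) of the bit-string `x` (with `b` blocks of length `ℓ`) is all-ones. -/
def blockAllOnes (b ℓ : ℕ) (x : Fin (b * ℓ) → Bool) (j : Fin b) : Prop :=
  ∀ i : Fin (b * ℓ), (i : ℕ) / ℓ = (j : ℕ) → x i = true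

/-- Block `j` (0-indexed) of the bit-string `x` is all-zeros. -/
def blockAllZeros (b ℓ : ℕ) (x : Fin (b * ℓ) → Bool) (j : Fin b) : Prop :=
  ∀ i : Fin (b * ℓ), (i : ℕ) / ℓ = (j : ℕ) → x i = false

instance (b ℓ : ℕ) (x : Fin (b * ℓ) → Bool) (j : Fin b) : Decidable (blockAllOnes b ℓ x j) := by
  unfold blockAllOnes; infer_instance

instance (b ℓ : ℕ) (x : Fin (b * ℓ) → Bool) (j : Fin b) : Decidable (blockAllZeros b ℓ x j) := by
  unfold blockAllZeros; infer_instance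

/-- OneRoyalRoad: `ℓ` times the number of all-ones blocks. -/
def oneRoyalRoad (b ℓ : ℕ) (x : Fin (b * ℓ) → Bool) : ℕ :=
  ℓ * (Finset.univ.filter fun j : Fin b => blockAllOnes b ℓ x j).card

/-- ZeroRoyalRoad: `ℓ` times the number of all-zeros blocks. -/
def zeroRoyalRoad (b ℓ : ℕ) (x : Fin (b * ℓ) → Bool) : ℕ :=
  ℓ * (Finset.univ.filter fun j : Fin b => blockAllZeros b ℓ x j).card

/-- Number of one-bits in block `j` of `x`. -/
def blockOnes (b ℓ : ℕ) (x : Fin (b * ℓ) → Bool) (j : Fin b) : ℕ :=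
  (Finset.univ.filter fun i : Fin (b * ℓ) => (i : ℕ) / ℓ = (j : ℕ) ∧ x i = true).card

/-- Number of zero-bits in block `j` of `x`. -/
def blockZeros (b ℓ : ℕ) (x : Fin (b * ℓ) → Bool) (j : Fin b) : ℕ :=
  (Finset.univ.filter fun i : Fin (b * ℓ) => (i : ℕ) / ℓ = (j : ℕ) ∧ x i = false).card

section Aux
variable {b ℓ : ℕ}

def blkElt (hℓ : 0 < ℓ) (j : Fin b) : Fin (b * ℓ) :=
  ⟨j * ℓ, (Nat.mul_lt_mul_right hℓ).mpr j.isLt⟩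

lemma blkElt_div (hℓ : 0 < ℓ) (j : Fin b) : ((blkElt hℓ j : Fin (b*ℓ)) : ℕ) / ℓ = j :=
  Nat.mul_div_cancel j hℓ

lemma not_both (hℓ : 0 < ℓ) {x : Fin (b*ℓ) → Bool} {j : Fin b}
    (h1 : blockAllOnes b ℓ x j) (h2 : blockAllZeros b ℓ x j) : False := by
  have t1 := h1 (blkElt hℓ j) (blkElt_div hℓ j)
  have t2 := h2 (blkElt hℓ j) (blkElt_div hℓ j)
  simp_all

def mono (b ℓ : ℕ) (x : Fin (b*ℓ) → Bool) : Prop :=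
  ∀ j : Fin b, blockAllOnes b ℓ x j ∨ blockAllZeros b ℓ x j

lemma mono_sum (hℓ : 0 < ℓ) {x : Fin (b*ℓ) → Bool} (hm : mono b ℓ x) :
    oneRoyalRoad b ℓ x + zeroRoyalRoad b ℓ x = ℓ * b := by
  have hz : (Finset.univ.filter fun j : Fin b => blockAllZeros b ℓ x j)
      = Finset.univ.filter fun j : Fin b => ¬ blockAllOnes b ℓ x j := by
    ext j
    simp only [mem_filter, mem_univ, true_and]
    exact ⟨fun h2 h1 => not_both hℓ h1 h2, fun h1 => (hm j).resolve_left h1⟩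
  rw [oneRoyalRoad, zeroRoyalRoad, hz, ← Nat.mul_add,
    Finset.card_filter_add_card_filter_not, Finset.card_univ, Fintype.card_fin]

lemma sum_le {x : Fin (b*ℓ) → Bool} (hℓ : 0 < ℓ) :
    oneRoyalRoad b ℓ x + zeroRoyalRoad b ℓ x ≤ ℓ * b := by
  rw [oneRoyalRoad, zeroRoyalRoad, ← Nat.mul_add]
  refine Nat.mul_le_mul_left ℓ ?_
  calc (Finset.univ.filter fun j : Fin b => blockAllOnes b ℓ x j).card
        + (Finset.univ.filter fun j : Fin b => blockAllZeros b ℓ x j).card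
      = ((Finset.univ.filter fun j : Fin b => blockAllOnes b ℓ x j)
        ∪ (Finset.univ.filter fun j : Fin b => blockAllZeros b ℓ x j)).card := by
        rw [Finset.card_union_of_disjoint]
        rw [Finset.disjoint_filter]
        exact fun j _ h1 h2 => not_both hℓ h1 h2
    _ ≤ (Finset.univ : Finset (Fin b)).card := Finset.card_le_card (Finset.subset_univ _)
    _ = b := by simp

lemma mono_pareto (hℓ : 0 < ℓ) {x : Fin (b*ℓ) → Bool} (hm : mono b ℓ x) :
    paretoOptimal (oneRoyalRoad b ℓ) (zeroRoyalRoad b ℓ) x := by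
  rintro y ⟨h1, h2, h3⟩
  have e1 := mono_sum hℓ hm
  have e2 := sum_le (x := y) hℓ
  omega

lemma pareto_mono (hℓ : 0 < ℓ) {x : Fin (b*ℓ) → Bool}
    (hp : paretoOptimal (oneRoyalRoad b ℓ) (zeroRoyalRoad b ℓ) x) : mono b ℓ x := by
  by_contra hm
  unfold mono at hm
  push_neg at hm
  obtain ⟨j, h1, h2⟩ := hm
  set y : Fin (b*ℓ) → Bool := fun i => if (i : ℕ) / ℓ = (j : ℕ) then true else x i with hy
  have hagree : ∀ i : Fin (b*ℓ), ((i : ℕ) / ℓ) ≠ (j : ℕ) → y i = x i := by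
    intro i hi; simp [hy, hi]
  have hones : (Finset.univ.filter fun k : Fin b => blockAllOnes b ℓ y k)
      = insert j (Finset.univ.filter fun k : Fin b => blockAllOnes b ℓ x k) := by
    ext k
    simp only [mem_filter, mem_univ, true_and, mem_insert]
    constructor
    · intro hk
      rcases eq_or_ne k j with rfl | hkj
      · exact Or.inl rfl
      · refine Or.inr fun i hi => ?_
        rw [← hagree i (fun h => hkj (Fin.ext (hi.symm.trans h)))]
        exact hk i hi
    · rintro (rfl | hk)
      · intro i hi; simp [hy, hi]
      · intro i hi
        rcases eq_or_ne ((i : ℕ)/ℓ) (j : ℕ) with h | h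
        · simp [hy, h]
        · rw [hagree i h]; exact hk i hi
  have hzeros : (Finset.univ.filter fun k : Fin b => blockAllZeros b ℓ y k)
      = Finset.univ.filter fun k : Fin b => blockAllZeros b ℓ x k := by
    ext k
    simp only [mem_filter, mem_univ, true_and]
    constructor
    · intro hk
      rcases eq_or_ne k j with rfl | hkj
      · exfalso
        have := hk (blkElt hℓ k) (blkElt_div hℓ k)
        rw [hy] at this
        simp [blkElt_div hℓ k] at this
      · intro i hi
        rw [← hagree i (fun h => hkj (Fin.ext (hi.symm.trans h)))]
        exact hk i hi
    · intro hk
      rcases eq_or_ne k j with rfl | hkj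
      · exact absurd hk h2
      · intro i hi
        rw [hagree i (fun h => hkj (Fin.ext (hi.symm.trans h)))]
        exact hk i hi
  have hjnot : j ∉ (Finset.univ.filter fun k : Fin b => blockAllOnes b ℓ x k) := by
    simp [h1]
  apply hp y
  refine ⟨?_, ?_, Or.inl ?_⟩
  · rw [oneRoyalRoad, oneRoyalRoad, hones, Finset.card_insert_of_notMem hjnot]
    exact Nat.mul_le_mul_left ℓ (Nat.le_succ _)
  · rw [zeroRoyalRoad, zeroRoyalRoad, hzeros]
  · rw [oneRoyalRoad, oneRoyalRoad, hones, Finset.card_insert_of_notMem hjnot]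
    have : 0 < ℓ := hℓ
    nlinarith

lemma pareto_iff_mono (hℓ : 0 < ℓ) (x : Fin (b*ℓ) → Bool) :
    paretoOptimal (oneRoyalRoad b ℓ) (zeroRoyalRoad b ℓ) x ↔ mono b ℓ x := by
  constructor
  · exact pareto_mono hℓ
  · exact mono_pareto hℓ

def toParetoEquiv (hℓ : 0 < ℓ) :
    (Fin b → Bool) ≃ {x : Fin (b*ℓ) → Bool //
        paretoOptimal (oneRoyalRoad b ℓ) (zeroRoyalRoad b ℓ) x} where
  toFun c := ⟨fun i => c ⟨(i : ℕ)/ℓ, (Nat.div_lt_iff_lt_mul hℓ).mpr i.isLt⟩, by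
    apply mono_pareto hℓ
    intro j
    rcases hc : c j with hcv | hcv
    · right; intro i hi
      simp only
      have : (⟨(i : ℕ)/ℓ, (Nat.div_lt_iff_lt_mul hℓ).mpr i.isLt⟩ : Fin b) = j := Fin.ext hi
      rw [this, hc]
    · left; intro i hi
      simp only
      have : (⟨(i : ℕ)/ℓ, (Nat.div_lt_iff_lt_mul hℓ).mpr i.isLt⟩ : Fin b) = j := Fin.ext hi
      rw [this, hc]⟩
  invFun x := fun j => x.1 (blkElt hℓ j)
  left_inv c := by
    funext j
    simp only
    congr 1
    exact Fin.ext (blkElt_div hℓ j)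
  right_inv x := by
    have hm := pareto_mono hℓ x.2
    ext i
    simp only
    set j : Fin b := ⟨(i : ℕ)/ℓ, (Nat.div_lt_iff_lt_mul hℓ).mpr i.isLt⟩ with hj
    rcases hm j with h | h
    · rw [h (blkElt hℓ j) (blkElt_div hℓ j), h i rfl]
    · rw [h (blkElt hℓ j) (blkElt_div hℓ j), h i rfl]
end Aux

/-- For ORZR on bit-strings of length n = b·ℓ with b > 1, the Pareto set has
exactly 2^b elements; equivalently the ratio of Pareto optimal solutions among all 2^n
bit-strings equals 2^{n/ℓ} / 2^n. -/
theorem ORZR_pareto_count (b ℓ : ℕ) (hb : 1 < b) (hℓ : 1 ≤ ℓ) :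
    Nat.card {x : Fin (b * ℓ) → Bool //
        paretoOptimal (oneRoyalRoad b ℓ) (zeroRoyalRoad b ℓ) x} = 2 ^ b ∧
      ((Nat.card {x : Fin (b * ℓ) → Bool //
          paretoOptimal (oneRoyalRoad b ℓ) (zeroRoyalRoad b ℓ) x} : ℝ) / 2 ^ (b * ℓ)
        = (2 : ℝ) ^ (b * ℓ / ℓ) / 2 ^ (b * ℓ)) := by
  have hℓ0 : 0 < ℓ := hℓ
  have hcard : Nat.card {x : Fin (b * ℓ) → Bool //
      paretoOptimal (oneRoyalRoad b ℓ) (zeroRoyalRoad b ℓ) x} = 2 ^ b := by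
    rw [← Nat.card_congr (toParetoEquiv hℓ0)]
    simp [Nat.card_eq_fintype_card]
  refine ⟨hcard, ?_⟩
  rw [hcard, Nat.mul_div_cancel b hℓ0]
  norm_num
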